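/- If λ ≥ 2μZ_f², then for any minimizer α* of the sketched program, the approximate solution x̃ = −λ⁻¹Aᵀ∇f(ASα*) satisfies ‖x̃ − x*‖₂ ≤ √(μ/(2λ)) · Z_f · ‖x*‖₂. -/

import Mathlib

open Matrix Finset Real Set

noncomputable section

namespace Sketch

/-- The ℓ2 norm of a vector in `Fin k → ℝ`. -/
def norm2 {k : ℕ} (x : Fin k → ℝ) : ℝ := Real.sqrt (∑ i, x i ^ 2)

/-- The continuous linear functional `v ↦ ⟨w, v⟩`; used to state that a function has
gradient `w` at a point. -/
def dotCLM {k : ℕ} (w : Fin k → ℝ) : (Fin k → ℝ) →L[ℝ] ℝ :=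
  LinearMap.toContinuousLinearMap
    { toFun := fun v => w ⬝ᵥ v
      map_add' := fun a b => dotProduct_add w a b
      map_smul' := fun c a => by
        simp [dotProduct, Finset.mul_sum, mul_left_comm] }

/-- The domain of the Fenchel conjugate `f*`. -/
def fenchelDom {k : ℕ} (f : (Fin k → ℝ) → ℝ) : Set (Fin k → ℝ) :=
  {z | BddAbove (Set.range fun w => w ⬝ᵥ z - f w)}

/-- The Fenchel conjugate `f*(z) = sup_w (⟨w, z⟩ - f(w))` (as a real-valued supremum,
meaningful on `fenchelDom f`). -/
def fenchel {k : ℕ} (f : (Fin k → ℝ) → ℝ) (z : Fin k → ℝ) : ℝ :=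
  ⨆ w, (w ⬝ᵥ z - f w)

/-- The subdifferential of the Fenchel conjugate `f*` at `z`. -/
def fenchelSubdiff {k : ℕ} (f : (Fin k → ℝ) → ℝ) (z : Fin k → ℝ) : Set (Fin k → ℝ) :=
  {g | ∀ y ∈ fenchelDom f, fenchel f z + g ⬝ᵥ (y - z) ≤ fenchel f y}

/-- `P` is the orthogonal projector onto the range (column space) of `S`. -/
def IsOrthProj {q m : ℕ} (S : Matrix (Fin q) (Fin m) ℝ) (P : Matrix (Fin q) (Fin q) ℝ) : Prop :=
  Pᵀ = P ∧ P * P = P ∧ P * S = S ∧ ∃ C : Matrix (Fin m) (Fin q) ℝ, P = S * C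

/-- The quantity `Z_f`: the supremum of `(Δᵀ B P⊥ Bᵀ Δ)^{1/2} / ‖Δ‖₂` over nonzero
`Δ ∈ dom f* - z*`. -/
def Zf {k q : ℕ} (f : (Fin k → ℝ) → ℝ) (B : Matrix (Fin k) (Fin q) ℝ)
    (Pperp : Matrix (Fin q) (Fin q) ℝ) (zs : Fin k → ℝ) : ℝ :=
  sSup {r | ∃ Δ : Fin k → ℝ, Δ ≠ 0 ∧ zs + Δ ∈ fenchelDom f ∧
    r = Real.sqrt (Δ ⬝ᵥ (B * Pperp * Bᵀ).mulVec Δ) / norm2 Δ}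

/-- The spectral norm (largest singular value) of a matrix. -/
def specNorm {a b : ℕ} (M : Matrix (Fin a) (Fin b) ℝ) : ℝ :=
  sSup {r | ∃ v : Fin b → ℝ, norm2 v = 1 ∧ r = norm2 (M.mulVec v)}

/-- The eigenvalues of `A * Aᵀ` (i.e. the squared singular values of `A`),
sorted in decreasing order. -/
def eigsDesc {n d : ℕ} (A : Matrix (Fin n) (Fin d) ℝ) : Fin n → ℝ := fun i =>
  ((Matrix.isHermitian_mul_conjTranspose_self A).eigenvalues ∘
    Tuple.sort (Matrix.isHermitian_mul_conjTranspose_self A).eigenvalues) i.rev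

/-- The spectral tail `R_k(A) = (σ_k² + (1/k) ∑_{j=k+1}^ρ σ_j²)^{1/2}`. -/
def Rk {n d : ℕ} (A : Matrix (Fin n) (Fin d) ℝ) (k : ℕ) : ℝ :=
  Real.sqrt ((∑ j : Fin n, if (j : ℕ) + 1 = k then eigsDesc A j else 0)
    + (1 / (k : ℝ)) * ∑ j : Fin n, if k ≤ (j : ℕ) then eigsDesc A j else 0)

/-- Product measure on `n × m` matrices with i.i.d. standard Gaussian entries. -/
def gaussMatrix (n m : ℕ) : MeasureTheory.Measure (Fin n → Fin m → ℝ) :=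
  MeasureTheory.Measure.pi fun _ => MeasureTheory.Measure.pi fun _ =>
    ProbabilityTheory.gaussianReal 0 1


/-- The largest eigenvalue (Rayleigh quotient supremum) of a symmetric matrix. -/
def eigMax {q : ℕ} (M : Matrix (Fin q) (Fin q) ℝ) : ℝ :=
  sSup {r | ∃ v : Fin q → ℝ, norm2 v = 1 ∧ r = v ⬝ᵥ M.mulVec v}

/-- The smallest eigenvalue (Rayleigh quotient infimum) of a symmetric matrix. -/
def eigMin {q : ℕ} (M : Matrix (Fin q) (Fin q) ℝ) : ℝ :=
  sInf {r | ∃ v : Fin q → ℝ, norm2 v = 1 ∧ r = v ⬝ᵥ M.mulVec v}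


@[simp] lemma dotCLM_apply {k : ℕ} (w v : Fin k → ℝ) : dotCLM w v = w ⬝ᵥ v := rfl

lemma norm2_nonneg {k : ℕ} (v : Fin k → ℝ) : 0 ≤ norm2 v := Real.sqrt_nonneg _

lemma norm2_sq {k : ℕ} (v : Fin k → ℝ) : norm2 v ^ 2 = ∑ i, v i ^ 2 :=
  Real.sq_sqrt (by positivity)

lemma dot_self_eq {k : ℕ} (v : Fin k → ℝ) : v ⬝ᵥ v = ∑ i, v i ^ 2 := by
  simp [dotProduct, sq]

lemma norm2_eq_sqrt_dot {k : ℕ} (v : Fin k → ℝ) : norm2 v = Real.sqrt (v ⬝ᵥ v) := by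
  rw [dot_self_eq]; rfl

lemma dot_self_nonneg {k : ℕ} (v : Fin k → ℝ) : 0 ≤ v ⬝ᵥ v := by
  rw [dot_self_eq]; positivity

lemma norm2_mul_self {k : ℕ} (v : Fin k → ℝ) : norm2 v * norm2 v = v ⬝ᵥ v := by
  rw [dot_self_eq, ← norm2_sq, sq]

lemma dot_le_norm2 {k : ℕ} (v w : Fin k → ℝ) : v ⬝ᵥ w ≤ norm2 v * norm2 w := by
  have h := Finset.sum_mul_sq_le_sq_mul_sq Finset.univ v w
  have h2 : v ⬝ᵥ w ≤ |v ⬝ᵥ w| := le_abs_self _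
  refine h2.trans ?_
  rw [← Real.sqrt_sq_eq_abs]
  unfold norm2
  rw [← Real.sqrt_mul (by positivity)]
  exact Real.sqrt_le_sqrt (by simpa [dotProduct] using h)

lemma norm2_smul {k : ℕ} (t : ℝ) (v : Fin k → ℝ) : norm2 (t • v) = |t| * norm2 v := by
  unfold norm2
  rw [← Real.sqrt_sq_eq_abs, ← Real.sqrt_mul (by positivity)]
  congr 1
  rw [Finset.mul_sum]
  exact Finset.sum_congr rfl fun i _ => by simp [Pi.smul_apply, smul_eq_mul]; ring


section Calc
variable {k : ℕ} {f : (Fin k → ℝ) → ℝ} {f' : (Fin k → ℝ) → Fin k → ℝ} {μ : ℝ}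

lemma hasDerivAt_line (v w : Fin k → ℝ) (t : ℝ)
    (hdiff : ∀ u, HasFDerivAt f (dotCLM (f' u)) u) :
    HasDerivAt (fun s : ℝ => f (v + s • (w - v))) (f' (v + t • (w - v)) ⬝ᵥ (w - v)) t := by
  have hL : HasDerivAt (fun s : ℝ => v + s • (w - v)) (w - v) t := by
    simpa using ((hasDerivAt_id t).smul_const (w - v)).const_add v
  simpa [Function.comp_def] using (hdiff (v + t • (w - v))).comp_hasDerivAt t hL

lemma grad_ineq (hconv : ConvexOn ℝ Set.univ f)
    (hdiff : ∀ u, HasFDerivAt f (dotCLM (f' u)) u)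
    (v w : Fin k → ℝ) : f v + f' v ⬝ᵥ (w - v) ≤ f w := by
  set L : ℝ →ᵃ[ℝ] (Fin k → ℝ) := AffineMap.lineMap v w with hLdef
  have hgc : ConvexOn ℝ Set.univ (f ∘ L) := by
    simpa using hconv.comp_affineMap L
  have hLt : ∀ t : ℝ, L t = v + t • (w - v) := by
    intro t
    rw [hLdef, AffineMap.lineMap_apply_module]
    module
  have hd : HasDerivAt (f ∘ L) (f' v ⬝ᵥ (w - v)) (0 : ℝ) := by
    have := hasDerivAt_line (f := f) (f' := f') v w 0 hdiff
    simp only [zero_smul, add_zero] at this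
    refine HasDerivAt.congr_of_eventuallyEq this ?_
    exact Filter.Eventually.of_forall fun t => by simp [hLt]
  have hslope := hgc.le_slope_of_hasDerivAt (Set.mem_univ (0:ℝ)) (Set.mem_univ (1:ℝ))
    one_pos hd
  have h0 : f (L 0) = f v := by rw [hLt]; simp
  have h1 : f (L 1) = f w := by rw [hLt]; simp
  rw [slope_def_field] at hslope
  simp [Function.comp] at hslope
  rw [h0, h1] at hslope
  have hd2 : f' v ⬝ᵥ (w - v) = f' v ⬝ᵥ w - f' v ⬝ᵥ v := dotProduct_sub _ _ _
  linarith [hslope]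

lemma descent (hμ : 0 < μ)
    (hdiff : ∀ u, HasFDerivAt f (dotCLM (f' u)) u)
    (hsmooth : ∀ w v, norm2 (f' w - f' v) ≤ μ * norm2 (w - v))
    (v w : Fin k → ℝ) :
    f w ≤ f v + f' v ⬝ᵥ (w - v) + μ / 2 * ((w - v) ⬝ᵥ (w - v)) := by
  set c : ℝ := (w - v) ⬝ᵥ (w - v) with hc
  set φ : ℝ → ℝ := fun t => f (v + t • (w - v)) - t * (f' v ⬝ᵥ (w - v)) - μ / 2 * t ^ 2 * c
    with hφ
  have hφd : ∀ t : ℝ, HasDerivAt φ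
      ((f' (v + t • (w - v)) - f' v) ⬝ᵥ (w - v) - μ * t * c) t := by
    intro t
    have h1 := hasDerivAt_line (f := f) (f' := f') v w t hdiff
    have h2 : HasDerivAt (fun s : ℝ => s * (f' v ⬝ᵥ (w - v))) (f' v ⬝ᵥ (w - v)) t := by
      simpa using (hasDerivAt_id t).mul_const (f' v ⬝ᵥ (w - v))
    have h3 : HasDerivAt (fun s : ℝ => μ / 2 * s ^ 2 * c) (μ * t * c) t := by
      have : HasDerivAt (fun s : ℝ => s ^ 2) (2 * t) t := by
        simpa using hasDerivAt_pow 2 t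
      have := (this.const_mul (μ / 2)).mul_const c
      exact this.congr_deriv (by ring)
    have := (h1.sub h2).sub h3
    refine this.congr_deriv (Eq.symm ?_)
    rw [sub_dotProduct]
  have hder : ∀ t ∈ Set.Ici (0:ℝ), HasDerivAt φ
      ((f' (v + t • (w - v)) - f' v) ⬝ᵥ (w - v) - μ * t * c) t := fun t _ => hφd t
  have hnonpos : ∀ t ∈ interior (Set.Icc (0:ℝ) 1), deriv φ t ≤ 0 := by
    intro t ht
    rw [interior_Icc] at ht
    rw [(hφd t).deriv]
    have hcs : (f' (v + t • (w - v)) - f' v) ⬝ᵥ (w - v)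
        ≤ norm2 (f' (v + t • (w - v)) - f' v) * norm2 (w - v) := dot_le_norm2 _ _
    have hlip := hsmooth (v + t • (w - v)) v
    have hsimp : v + t • (w - v) - v = t • (w - v) := by abel
    rw [hsimp, norm2_smul] at hlip
    have ht0 : 0 < t := ht.1
    rw [abs_of_pos ht0] at hlip
    have hn2 : norm2 (w - v) * norm2 (w - v) = c := norm2_mul_self _
    have h5 : norm2 (f' (v + t • (w - v)) - f' v) * norm2 (w - v) ≤ μ * (t * norm2 (w - v)) * norm2 (w - v) :=
      mul_le_mul_of_nonneg_right hlip (norm2_nonneg _)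
    have h6 : μ * (t * norm2 (w - v)) * norm2 (w - v) = μ * t * c := by
      rw [← hn2]; ring
    linarith [hcs, h5]
  have hcont : ContinuousOn φ (Set.Icc (0:ℝ) 1) :=
    fun t _ => ((hφd t).continuousAt).continuousWithinAt
  have hanti : AntitoneOn φ (Set.Icc (0:ℝ) 1) := by
    refine antitoneOn_of_deriv_nonpos (convex_Icc 0 1) hcont ?_ hnonpos
    intro t ht
    rw [interior_Icc] at ht
    exact (hφd t).differentiableAt.differentiableWithinAt
  have h01 := hanti (Set.left_mem_Icc.2 zero_le_one) (Set.right_mem_Icc.2 zero_le_one)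
    zero_le_one
  simp only [hφ] at h01
  simp at h01
  have hd2 : f' v ⬝ᵥ (w - v) = f' v ⬝ᵥ w - f' v ⬝ᵥ v := dotProduct_sub _ _ _
  linarith [h01]


lemma key_ineq (hμ : 0 < μ) (hconv : ConvexOn ℝ Set.univ f)
    (hdiff : ∀ u, HasFDerivAt f (dotCLM (f' u)) u)
    (hsmooth : ∀ w v, norm2 (f' w - f' v) ≤ μ * norm2 (w - v))
    (a b : Fin k → ℝ) :
    2 * μ * (f a + f' a ⬝ᵥ (b - a)) + (f' b - f' a) ⬝ᵥ (f' b - f' a) ≤ 2 * μ * f b := by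
  set D : Fin k → ℝ := f' b - f' a with hD
  set c : ℝ := 1 / μ with hc
  have hmc : μ * c = 1 := by rw [hc]; field_simp
  have h1 := grad_ineq hconv hdiff a (b - c • D)
  have h2 := descent hμ hdiff hsmooth b (b - c • D)
  have e1 : b - c • D - a = (b - a) - c • D := by module
  have e2 : b - c • D - b = -(c • D) := by module
  rw [e1] at h1
  rw [e2] at h2
  have d1 : f' a ⬝ᵥ ((b - a) - c • D) = f' a ⬝ᵥ (b - a) - c * (f' a ⬝ᵥ D) := by
    simp [dotProduct_sub, dotProduct_smul, smul_eq_mul]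
  have d2 : f' b ⬝ᵥ (-(c • D)) = -(c * (f' b ⬝ᵥ D)) := by
    simp [dotProduct_neg, dotProduct_smul, smul_eq_mul]
  have d3 : (-(c • D)) ⬝ᵥ (-(c • D)) = c ^ 2 * (D ⬝ᵥ D) := by
    simp [neg_dotProduct, dotProduct_neg, smul_dotProduct,
      dotProduct_smul, smul_eq_mul]
    ring
  have d4 : f' b ⬝ᵥ D - f' a ⬝ᵥ D = D ⬝ᵥ D := by rw [← sub_dotProduct]
  rw [d1] at h1
  rw [d2, d3] at h2
  have h5 : μ / 2 * (c ^ 2 * (D ⬝ᵥ D)) = c / 2 * (D ⬝ᵥ D) := by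
    rw [hc]; field_simp
  rw [h5] at h2
  have h6 := h1.trans h2
  have d5 : c * (f' b ⬝ᵥ D) - c * (f' a ⬝ᵥ D) = c * (D ⬝ᵥ D) := by rw [← mul_sub, d4]
  have h8 : f a + f' a ⬝ᵥ (b - a) + c / 2 * (D ⬝ᵥ D) ≤ f b := by linarith [h6, d5]
  have h9 := mul_le_mul_of_nonneg_left h8 (by positivity : (0:ℝ) ≤ 2 * μ)
  have r3 : 2 * μ * (c / 2 * (D ⬝ᵥ D)) = D ⬝ᵥ D := by
    rw [hc]; field_simp
  linarith [h9, r3]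

lemma cocoercive (hμ : 0 < μ) (hconv : ConvexOn ℝ Set.univ f)
    (hdiff : ∀ u, HasFDerivAt f (dotCLM (f' u)) u)
    (hsmooth : ∀ w v, norm2 (f' w - f' v) ≤ μ * norm2 (w - v))
    (v₁ v₂ : Fin k → ℝ) :
    (f' v₂ - f' v₁) ⬝ᵥ (f' v₂ - f' v₁) ≤ μ * ((f' v₂ - f' v₁) ⬝ᵥ (v₂ - v₁)) := by
  have k1 := key_ineq hμ hconv hdiff hsmooth v₁ v₂
  have k2 := key_ineq hμ hconv hdiff hsmooth v₂ v₁
  have e1 : (f' v₁ - f' v₂) ⬝ᵥ (f' v₁ - f' v₂) = (f' v₂ - f' v₁) ⬝ᵥ (f' v₂ - f' v₁) := by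
    have : f' v₁ - f' v₂ = -(f' v₂ - f' v₁) := by module
    rw [this, neg_dotProduct, dotProduct_neg, neg_neg]
  rw [e1] at k2
  have e2 : v₁ - v₂ = -(v₂ - v₁) := by module
  rw [e2, dotProduct_neg] at k2
  have e3 : (f' v₂ - f' v₁) ⬝ᵥ (v₂ - v₁) = f' v₂ ⬝ᵥ (v₂ - v₁) - f' v₁ ⬝ᵥ (v₂ - v₁) := by
    rw [sub_dotProduct]
  rw [e3]
  linarith [k1, k2]

end Calc

section Opt
variable {k q : ℕ} {f : (Fin k → ℝ) → ℝ} {f' : (Fin k → ℝ) → Fin k → ℝ}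

lemma hasFDerivAt_comp_mulVec (hdiff : ∀ u, HasFDerivAt f (dotCLM (f' u)) u)
    (M : Matrix (Fin k) (Fin q) ℝ) (x : Fin q → ℝ) :
    HasFDerivAt (fun y => f (M.mulVec y)) (dotCLM (Mᵀ.mulVec (f' (M.mulVec x)))) x := by
  have hM : HasFDerivAt (fun y : Fin q → ℝ => M.mulVec y)
      (LinearMap.toContinuousLinearMap (Matrix.mulVecLin M)) x := by
    have := (LinearMap.toContinuousLinearMap (Matrix.mulVecLin M)).hasFDerivAt (x := x)
    simpa [Matrix.mulVecLin] using this
  have h := (hdiff (M.mulVec x)).comp x hM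
  have heq : (dotCLM (f' (M.mulVec x))).comp
      (LinearMap.toContinuousLinearMap (Matrix.mulVecLin M))
      = dotCLM (Mᵀ.mulVec (f' (M.mulVec x))) := by
    ext v
    simp [dotCLM, Matrix.mulVec_transpose, ← Matrix.dotProduct_mulVec]
  rw [heq] at h
  exact h

lemma hasFDerivAt_sumSq (x : Fin k → ℝ) :
    HasFDerivAt (fun y : Fin k → ℝ => ∑ i, y i ^ 2) (dotCLM ((2:ℝ) • x)) x := by
  have h : ∀ i : Fin k, HasFDerivAt (fun y : Fin k → ℝ => y i ^ 2)
      ((2 * x i) • (ContinuousLinearMap.proj i : (Fin k → ℝ) →L[ℝ] ℝ)) x := by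
    intro i
    have hp : HasFDerivAt (fun y : Fin k → ℝ => y i)
        (ContinuousLinearMap.proj i : (Fin k → ℝ) →L[ℝ] ℝ) x := by
      have := (ContinuousLinearMap.proj (R := ℝ) (φ := fun _ : Fin k => ℝ) i).hasFDerivAt (x := x)
      exact this
    have hm := hp.mul hp
    have he : ((fun y : Fin k → ℝ => y i) * fun y => y i) = fun y => y i ^ 2 := by
      funext y; rw [Pi.mul_apply]; ring
    rw [he] at hm
    refine hm.congr_fderiv (Eq.symm ?_)
    ext v
    simp
    ring
  have hsum := HasFDerivAt.fun_sum (fun i (_ : i ∈ Finset.univ) => h i)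
  refine hsum.congr_fderiv (Eq.symm ?_)
  ext v
  simp [dotCLM, dotProduct]

lemma grad_zero_of_min {φ : (Fin k → ℝ) → ℝ} {g : Fin k → ℝ} {x0 : Fin k → ℝ}
    (hmin : ∀ x, φ x0 ≤ φ x) (hd : HasFDerivAt φ (dotCLM g) x0) : g = 0 := by
  have h0 : IsLocalMin φ x0 := Filter.Eventually.of_forall (fun x => hmin x)
  have hz := h0.hasFDerivAt_eq_zero hd
  funext j
  have hj := congrFun (congrArg (fun L : (Fin k → ℝ) →L[ℝ] ℝ => (L : (Fin k → ℝ) → ℝ)) hz)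
    (Pi.single j 1)
  simpa using hj

end Opt

section OptCond
variable {n d m : ℕ} {f : (Fin n → ℝ) → ℝ} {f' : (Fin n → ℝ) → Fin n → ℝ}

lemma primal_opt (hdiff : ∀ u, HasFDerivAt f (dotCLM (f' u)) u)
    (A : Matrix (Fin n) (Fin d) ℝ) (lam : ℝ) (xs : Fin d → ℝ)
    (hxs : ∀ x, f (A.mulVec xs) + lam / 2 * norm2 xs ^ 2
      ≤ f (A.mulVec x) + lam / 2 * norm2 x ^ 2) :
    Aᵀ.mulVec (f' (A.mulVec xs)) + lam • xs = 0 := by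
  set φ : (Fin d → ℝ) → ℝ := fun x => f (A.mulVec x) + lam / 2 * ∑ i, x i ^ 2 with hφ
  have hmin : ∀ x, φ xs ≤ φ x := by
    intro x
    have h := hxs x
    rw [norm2_sq, norm2_sq] at h
    exact h
  have hd : HasFDerivAt φ (dotCLM (Aᵀ.mulVec (f' (A.mulVec xs)) + lam • xs)) xs := by
    have h1 := hasFDerivAt_comp_mulVec hdiff A xs
    have h2 := (hasFDerivAt_sumSq xs).const_mul (lam / 2)
    have h3 := h1.add h2
    refine h3.congr_fderiv (Eq.symm ?_)
    ext v
    simp [dotCLM, add_dotProduct, smul_dotProduct, smul_eq_mul,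
      dotProduct, Finset.mul_sum]
    rw [← Finset.sum_add_distrib]
    exact Finset.sum_congr rfl fun i _ => by ring
  exact grad_zero_of_min hmin hd

lemma sketched_opt (hdiff : ∀ u, HasFDerivAt f (dotCLM (f' u)) u)
    (A : Matrix (Fin n) (Fin d) ℝ) (S : Matrix (Fin d) (Fin m) ℝ) (lam : ℝ) (αs : Fin m → ℝ)
    (hαs : ∀ α, f ((A * S).mulVec αs) + lam / 2 * norm2 (S.mulVec αs) ^ 2
        ≤ f ((A * S).mulVec α) + lam / 2 * norm2 (S.mulVec α) ^ 2) :
    Sᵀ.mulVec (Aᵀ.mulVec (f' ((A * S).mulVec αs)) + lam • S.mulVec αs) = 0 := by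
  set φ : (Fin m → ℝ) → ℝ :=
    fun α => f ((A * S).mulVec α) + lam / 2 * ∑ i, (S.mulVec α) i ^ 2 with hφ
  have hmin : ∀ α, φ αs ≤ φ α := by
    intro α
    have h := hαs α
    rw [norm2_sq, norm2_sq] at h
    exact h
  have hd : HasFDerivAt φ
      (dotCLM ((A * S)ᵀ.mulVec (f' ((A * S).mulVec αs))
        + (lam / 2) • Sᵀ.mulVec ((2:ℝ) • S.mulVec αs))) αs := by
    have h1 := hasFDerivAt_comp_mulVec hdiff (A * S) αs
    have h2 := hasFDerivAt_comp_mulVec (f := fun y : Fin d → ℝ => ∑ i, y i ^ 2)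
      (f' := fun u => (2:ℝ) • u) (fun u => hasFDerivAt_sumSq u) S αs
    have h3 := h1.add (h2.const_mul (lam / 2))
    refine h3.congr_fderiv (Eq.symm ?_)
    ext v
    simp [dotCLM, add_dotProduct, smul_dotProduct, smul_eq_mul]
  have hz := grad_zero_of_min hmin hd
  have he : (A * S)ᵀ.mulVec (f' ((A * S).mulVec αs))
        + (lam / 2) • Sᵀ.mulVec ((2:ℝ) • S.mulVec αs)
      = Sᵀ.mulVec (Aᵀ.mulVec (f' ((A * S).mulVec αs)) + lam • S.mulVec αs) := by
    rw [Matrix.transpose_mul, ← Matrix.mulVec_mulVec, Matrix.mulVec_add, Matrix.mulVec_smul,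
      Matrix.mulVec_smul]
    funext i
    simp [smul_eq_mul]
    ring
  rw [he] at hz
  exact hz

end OptCond

section Fen
variable {k : ℕ} {f : (Fin k → ℝ) → ℝ} {f' : (Fin k → ℝ) → Fin k → ℝ}

lemma norm2_pos {v : Fin k → ℝ} (hv : v ≠ 0) : 0 < norm2 v := by
  rcases (norm2_nonneg v).lt_or_eq with h | h
  · exact h
  · exfalso
    apply hv
    have h2 : ∑ i, v i ^ 2 = 0 := by
      have := norm2_sq v
      rw [← h] at this
      simpa using this.symm
    funext i
    have := (Finset.sum_eq_zero_iff_of_nonneg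
      (fun j _ => sq_nonneg (v j))).mp h2 i (Finset.mem_univ i)
    exact pow_eq_zero_iff (n := 2) (by norm_num) |>.mp this

lemma grad_mem_fenchelDom (hconv : ConvexOn ℝ Set.univ f)
    (hdiff : ∀ u, HasFDerivAt f (dotCLM (f' u)) u) (v : Fin k → ℝ) :
    f' v ∈ fenchelDom f := by
  refine ⟨v ⬝ᵥ f' v - f v, ?_⟩
  rintro r ⟨w, rfl⟩
  have h := grad_ineq hconv hdiff v w
  have hd : f' v ⬝ᵥ (w - v) = f' v ⬝ᵥ w - f' v ⬝ᵥ v := dotProduct_sub _ _ _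
  have hc1 : w ⬝ᵥ f' v = f' v ⬝ᵥ w := dotProduct_comm _ _
  have hc2 : v ⬝ᵥ f' v = f' v ⬝ᵥ v := dotProduct_comm _ _
  simp only [hc1, hc2]
  linarith

end Fen

section Proj
variable {d m : ℕ} {S : Matrix (Fin d) (Fin m) ℝ} {P : Matrix (Fin d) (Fin d) ℝ}

lemma proj_fix (hP : IsOrthProj S P) (α : Fin m → ℝ) :
    P.mulVec (S.mulVec α) = S.mulVec α := by
  rw [Matrix.mulVec_mulVec, hP.2.2.1]

lemma proj_kill (hP : IsOrthProj S P) {y : Fin d → ℝ} (hy : Sᵀ.mulVec y = 0) :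
    P.mulVec y = 0 := by
  obtain ⟨hsym, hidem, hPS, C, hPC⟩ := hP
  have hPt : P = Cᵀ * Sᵀ := by rw [← hsym, hPC, Matrix.transpose_mul]
  rw [hPt, ← Matrix.mulVec_mulVec, hy, Matrix.mulVec_zero]

lemma proj_perp_mul (hP : IsOrthProj S P) : (1 - P)ᵀ * P = 0 := by
  obtain ⟨hsym, hidem, -, -⟩ := hP
  rw [Matrix.transpose_sub, Matrix.transpose_one, hsym, Matrix.sub_mul, Matrix.one_mul, hidem]
  simp

lemma proj_perp_idem (hP : IsOrthProj S P) : (1 - P) * (1 - P) = 1 - P := by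
  obtain ⟨hsym, hidem, -, -⟩ := hP
  rw [Matrix.sub_mul, Matrix.one_mul, Matrix.mul_sub, Matrix.mul_one, hidem]
  abel

lemma proj_perp_transpose (hP : IsOrthProj S P) : (1 - P)ᵀ = 1 - P := by
  rw [Matrix.transpose_sub, Matrix.transpose_one, hP.1]

lemma dot_mulVec_transpose {a b : ℕ} (M : Matrix (Fin a) (Fin b) ℝ) (x : Fin b → ℝ)
    (u : Fin a → ℝ) : x ⬝ᵥ Mᵀ.mulVec u = M.mulVec x ⬝ᵥ u := by
  rw [Matrix.dotProduct_mulVec, Matrix.vecMul_transpose]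

lemma proj_orth (hP : IsOrthProj S P) (x y : Fin d → ℝ) :
    P.mulVec x ⬝ᵥ (1 - P).mulVec y = 0 := by
  rw [Matrix.dotProduct_mulVec, ← Matrix.mulVec_transpose, Matrix.mulVec_mulVec,
    proj_perp_mul hP]
  simp

lemma proj_perp_contract (hP : IsOrthProj S P) (x : Fin d → ℝ) :
    (1 - P).mulVec x ⬝ᵥ (1 - P).mulVec x ≤ x ⬝ᵥ x := by
  have h1 : (1 - P).mulVec x ⬝ᵥ (1 - P).mulVec x = x ⬝ᵥ (1 - P).mulVec x := by
    rw [Matrix.dotProduct_mulVec, ← Matrix.mulVec_transpose, Matrix.mulVec_mulVec,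
      proj_perp_transpose hP, proj_perp_idem hP, dotProduct_comm]
  have h2 : P.mulVec x ⬝ᵥ P.mulVec x = x ⬝ᵥ P.mulVec x := by
    rw [Matrix.dotProduct_mulVec, ← Matrix.mulVec_transpose, Matrix.mulVec_mulVec,
      hP.1, hP.2.1, dotProduct_comm]
  have h3 : x ⬝ᵥ (1 - P).mulVec x + x ⬝ᵥ P.mulVec x = x ⬝ᵥ x := by
    rw [← dotProduct_add]
    congr 1
    rw [← Matrix.add_mulVec]
    simp
  have h4 : 0 ≤ P.mulVec x ⬝ᵥ P.mulVec x := dot_self_nonneg _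
  linarith [h1, h2, h3, h4]

end Proj

section ZfL
variable {k q : ℕ} {f : (Fin k → ℝ) → ℝ}

lemma frobenius_bound {a b : ℕ} (M : Matrix (Fin a) (Fin b) ℝ) (v : Fin b → ℝ) :
    M.mulVec v ⬝ᵥ M.mulVec v ≤ (∑ i, ∑ j, M i j ^ 2) * (v ⬝ᵥ v) := by
  rw [dot_self_eq, dot_self_eq (v := v), Finset.sum_mul]
  apply Finset.sum_le_sum
  intro i _
  have h := Finset.sum_mul_sq_le_sq_mul_sq Finset.univ (fun j => M i j) v
  simpa [Matrix.mulVec, dotProduct] using h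

lemma quad_eq_dot (B : Matrix (Fin k) (Fin q) ℝ) {Pp : Matrix (Fin q) (Fin q) ℝ}
    (hsym : Ppᵀ = Pp) (hidem : Pp * Pp = Pp) (Δ : Fin k → ℝ) :
    Δ ⬝ᵥ (B * Pp * Bᵀ).mulVec Δ
      = Pp.mulVec (Bᵀ.mulVec Δ) ⬝ᵥ Pp.mulVec (Bᵀ.mulVec Δ) := by
  have hM : (Pp * Bᵀ)ᵀ * (Pp * Bᵀ) = B * Pp * Bᵀ := by
    rw [Matrix.transpose_mul, Matrix.transpose_transpose, hsym]
    calc B * Pp * (Pp * Bᵀ) = B * (Pp * Pp) * Bᵀ := by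
          rw [Matrix.mul_assoc B Pp (Pp * Bᵀ), ← Matrix.mul_assoc Pp Pp Bᵀ,
            ← Matrix.mul_assoc B (Pp * Pp) Bᵀ]
      _ = B * Pp * Bᵀ := by rw [hidem]
  rw [← hM, ← Matrix.mulVec_mulVec (M := (Pp * Bᵀ)ᵀ), dot_mulVec_transpose,
    ← Matrix.mulVec_mulVec]

lemma Zf_set_bddAbove (B : Matrix (Fin k) (Fin q) ℝ) {Pp : Matrix (Fin q) (Fin q) ℝ}
    (hsym : Ppᵀ = Pp) (hidem : Pp * Pp = Pp) (zs : Fin k → ℝ) :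
    BddAbove {r | ∃ Δ : Fin k → ℝ, Δ ≠ 0 ∧ zs + Δ ∈ fenchelDom f ∧
      r = Real.sqrt (Δ ⬝ᵥ (B * Pp * Bᵀ).mulVec Δ) / norm2 Δ} := by
  refine ⟨Real.sqrt (∑ i, ∑ j, (Pp * Bᵀ) i j ^ 2), ?_⟩
  rintro r ⟨Δ, hΔ, -, rfl⟩
  have hn : 0 < norm2 Δ := norm2_pos hΔ
  rw [div_le_iff₀ hn]
  rw [quad_eq_dot B hsym hidem, Matrix.mulVec_mulVec]
  calc Real.sqrt ((Pp * Bᵀ).mulVec Δ ⬝ᵥ (Pp * Bᵀ).mulVec Δ)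
      ≤ Real.sqrt ((∑ i, ∑ j, (Pp * Bᵀ) i j ^ 2) * (Δ ⬝ᵥ Δ)) :=
        Real.sqrt_le_sqrt (frobenius_bound _ _)
    _ = Real.sqrt (∑ i, ∑ j, (Pp * Bᵀ) i j ^ 2) * norm2 Δ := by
        rw [Real.sqrt_mul (by positivity), norm2_eq_sqrt_dot]

lemma Zf_nonneg (B : Matrix (Fin k) (Fin q) ℝ) (Pp : Matrix (Fin q) (Fin q) ℝ)
    (zs : Fin k → ℝ) : 0 ≤ Zf f B Pp zs := by
  apply Real.sSup_nonneg
  rintro r ⟨Δ, hΔ, -, rfl⟩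
  exact div_nonneg (Real.sqrt_nonneg _) (norm2_nonneg _)

lemma Zf_le (B : Matrix (Fin k) (Fin q) ℝ) {Pp : Matrix (Fin q) (Fin q) ℝ}
    (hsym : Ppᵀ = Pp) (hidem : Pp * Pp = Pp) (zs : Fin k → ℝ) {Δ : Fin k → ℝ}
    (hΔ : Δ ≠ 0) (hdom : zs + Δ ∈ fenchelDom f) :
    Real.sqrt (Δ ⬝ᵥ (B * Pp * Bᵀ).mulVec Δ) ≤ Zf f B Pp zs * norm2 Δ := by
  have hn : 0 < norm2 Δ := norm2_pos hΔ
  have hmem : Real.sqrt (Δ ⬝ᵥ (B * Pp * Bᵀ).mulVec Δ) / norm2 Δ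
      ∈ {r | ∃ Δ' : Fin k → ℝ, Δ' ≠ 0 ∧ zs + Δ' ∈ fenchelDom f ∧
        r = Real.sqrt (Δ' ⬝ᵥ (B * Pp * Bᵀ).mulVec Δ') / norm2 Δ'} := ⟨Δ, hΔ, hdom, rfl⟩
  have hle := le_csSup (Zf_set_bddAbove B hsym hidem zs) hmem
  rw [Zf] at *
  calc Real.sqrt (Δ ⬝ᵥ (B * Pp * Bᵀ).mulVec Δ)
      = Real.sqrt (Δ ⬝ᵥ (B * Pp * Bᵀ).mulVec Δ) / norm2 Δ * norm2 Δ := by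
        field_simp
    _ ≤ _ * norm2 Δ := mul_le_mul_of_nonneg_right hle (le_of_lt hn)

end ZfL

lemma dot_mulVec' {a b : ℕ} (M : Matrix (Fin a) (Fin b) ℝ) (x : Fin a → ℝ) (u : Fin b → ℝ) :
    x ⬝ᵥ M.mulVec u = Mᵀ.mulVec x ⬝ᵥ u := by
  conv_lhs => rw [← Matrix.transpose_transpose M]
  rw [dot_mulVec_transpose]


set_option maxHeartbeats 1000000 in
/-- deterministic bound via `Z_f`: if `λ ≥ 2 μ Z_f²`, then for any
minimizer `αs` of the sketched program, the approximate solution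
`x̃ = -λ⁻¹ Aᵀ ∇f(A S αs)` satisfies `‖x̃ - x*‖₂ ≤ √(μ/(2λ)) Z_f ‖x*‖₂`. -/
theorem statement_2 {n d m : ℕ} (f : (Fin n → ℝ) → ℝ) (f' : (Fin n → ℝ) → Fin n → ℝ)
    (A : Matrix (Fin n) (Fin d) ℝ) (μ lam : ℝ)
    (hμ : 0 < μ) (hlam : 0 < lam)
    (hconv : ConvexOn ℝ Set.univ f)
    (hdiff : ∀ w, HasFDerivAt f (dotCLM (f' w)) w)
    (hsmooth : ∀ w v, norm2 (f' w - f' v) ≤ μ * norm2 (w - v))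
    (S : Matrix (Fin d) (Fin m) ℝ) (P : Matrix (Fin d) (Fin d) ℝ)
    (hP : IsOrthProj S P)
    (xs : Fin d → ℝ)
    (hxs : ∀ x, f (A.mulVec xs) + lam / 2 * norm2 xs ^ 2
        ≤ f (A.mulVec x) + lam / 2 * norm2 x ^ 2)
    (hZ : 2 * μ * Zf f A (1 - P) (f' (A.mulVec xs)) ^ 2 ≤ lam)
    (αs : Fin m → ℝ)
    (hαs : ∀ α, f ((A * S).mulVec αs) + lam / 2 * norm2 (S.mulVec αs) ^ 2
        ≤ f ((A * S).mulVec α) + lam / 2 * norm2 (S.mulVec α) ^ 2) :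
    norm2 (-(lam⁻¹ • Aᵀ.mulVec (f' ((A * S).mulVec αs))) - xs)
      ≤ Real.sqrt (μ / (2 * lam)) * Zf f A (1 - P) (f' (A.mulVec xs)) * norm2 xs := by
  have hlam0 : lam ≠ 0 := ne_of_gt hlam
  set zs : Fin n → ℝ := f' (A.mulVec xs) with hzs
  set zt : Fin n → ℝ := f' ((A * S).mulVec αs) with hzt
  set Δ : Fin n → ℝ := zt - zs with hΔdef
  set xh : Fin d → ℝ := S.mulVec αs with hxh
  set av : Fin d → ℝ := Aᵀ.mulVec zs with hav
  set bv : Fin d → ℝ := Aᵀ.mulVec zt with hbv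
  set Z : ℝ := Zf f A (1 - P) zs with hZdef
  set cx : ℝ := norm2 xs with hcx
  -- optimality conditions
  have hopt1 : av + lam • xs = 0 := primal_opt hdiff A lam xs hxs
  have ha : av = -(lam • xs) := by
    have := hopt1
    linear_combination (norm := module) this
  have hopt2 : Sᵀ.mulVec (bv + lam • xh) = 0 := sketched_opt hdiff A S lam αs hαs
  have hPb0 : P.mulVec (bv + lam • xh) = 0 := proj_kill hP hopt2
  have hPb : P.mulVec bv = -(lam • xh) := by
    have h1 : P.mulVec (bv + lam • xh) = P.mulVec bv + lam • P.mulVec xh := by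
      rw [Matrix.mulVec_add, Matrix.mulVec_smul]
    have h2 : P.mulVec xh = xh := proj_fix hP αs
    rw [h1, h2] at hPb0
    linear_combination (norm := module) hPb0
  -- vectors
  set y : Fin d → ℝ := Aᵀ.mulVec Δ with hy
  have hyba : y = bv - av := by rw [hy, hΔdef, Matrix.mulVec_sub]
  set qv : Fin d → ℝ := P.mulVec y with hqv
  set wv : Fin d → ℝ := (1 - P).mulVec y with hwv
  set uv : Fin d → ℝ := (1 - P).mulVec av with huv
  have hsplit : y = qv + wv := by
    rw [hqv, hwv, ← Matrix.add_mulVec]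
    simp
  -- cocoercivity
  have hco := cocoercive hμ hconv hdiff hsmooth (A.mulVec xs) ((A * S).mulVec αs)
  have hvm : (A * S).mulVec αs = A.mulVec xh := by rw [hxh, Matrix.mulVec_mulVec]
  have hco2 : Δ ⬝ᵥ Δ ≤ μ * (Δ ⬝ᵥ A.mulVec (xh - xs)) := by
    have h3 : (A * S).mulVec αs - A.mulVec xs = A.mulVec (xh - xs) := by
      rw [hvm, Matrix.mulVec_sub]
    rw [← h3]
    exact hco
  have hdot : Δ ⬝ᵥ A.mulVec (xh - xs) = y ⬝ᵥ (xh - xs) := by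
    rw [dot_mulVec' A Δ (xh - xs), hy]
  -- compute lam • (xh - xs) = av - P.mulVec bv
  have hlay : lam • (xh - xs) = av - P.mulVec bv := by
    rw [hPb, ha]
    module
  -- master inequality
  have hmaster : lam * (Δ ⬝ᵥ Δ) + μ * (qv ⬝ᵥ qv) ≤ μ * (uv ⬝ᵥ wv) := by
    have h4 : lam * (y ⬝ᵥ (xh - xs)) = y ⬝ᵥ (av - P.mulVec bv) := by
      rw [← hlay, dotProduct_smul, smul_eq_mul]
    have h5 : y ⬝ᵥ (av - P.mulVec bv) = uv ⬝ᵥ wv - qv ⬝ᵥ qv := by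
      have e1 : av - P.mulVec bv = uv - qv := by
        rw [huv, hqv, hyba, Matrix.mulVec_sub]
        have : (1 - P).mulVec av = av - P.mulVec av := by
          rw [Matrix.sub_mulVec]
          simp
        rw [this]
        module
      rw [e1, hsplit]
      rw [dotProduct_sub, add_dotProduct, add_dotProduct]
      have o1 : qv ⬝ᵥ uv = 0 := by
        rw [dotProduct_comm, huv, hqv]
        rw [dotProduct_comm]
        exact proj_orth hP y av
      have o2 : wv ⬝ᵥ qv = 0 := by
        rw [dotProduct_comm, hqv, hwv]
        exact proj_orth hP y y
      rw [dotProduct_comm wv uv] at *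
      nlinarith [o1, o2]
    have h6 := mul_le_mul_of_nonneg_left hco2 (le_of_lt hlam)
    rw [hdot] at h6
    nlinarith [h6, h4, h5]
  -- nonnegativity facts
  have hQ0 : 0 ≤ qv ⬝ᵥ qv := dot_self_nonneg _
  have hT0 : 0 ≤ Δ ⬝ᵥ Δ := dot_self_nonneg _
  set sw : ℝ := norm2 wv with hsw
  have hsw0 : 0 ≤ sw := norm2_nonneg _
  have hswsq : sw * sw = wv ⬝ᵥ wv := norm2_mul_self _
  set t : ℝ := norm2 Δ with ht
  have ht0 : 0 ≤ t := norm2_nonneg _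
  have htsq : t * t = Δ ⬝ᵥ Δ := norm2_mul_self _
  have hc0 : 0 ≤ cx := norm2_nonneg _
  have hZ0 : 0 ≤ Z := Zf_nonneg A (1 - P) zs
  -- bound on u
  have hu : norm2 uv ≤ lam * cx := by
    have h1 : uv = (-lam) • ((1 - P).mulVec xs) := by
      rw [huv, ha, show -(lam • xs) = (-lam) • xs from by module, Matrix.mulVec_smul]
    rw [h1, norm2_smul, abs_neg, abs_of_pos hlam]
    apply mul_le_mul_of_nonneg_left _ (le_of_lt hlam)
    rw [hcx, norm2_eq_sqrt_dot, norm2_eq_sqrt_dot]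
    exact Real.sqrt_le_sqrt (proj_perp_contract hP xs)
  have huw : uv ⬝ᵥ wv ≤ (lam * cx) * sw := by
    calc uv ⬝ᵥ wv ≤ norm2 uv * norm2 wv := dot_le_norm2 _ _
      _ ≤ (lam * cx) * sw := mul_le_mul_of_nonneg_right hu hsw0
  -- bound on w via Z
  have hwZ : sw ≤ Z * t := by
    by_cases hΔ0 : Δ = 0
    · have hy0 : y = 0 := by rw [hy, hΔ0, Matrix.mulVec_zero]
      have hw0 : wv = 0 := by rw [hwv, hy0, Matrix.mulVec_zero]
      have hs0 : sw = 0 := by rw [hsw, hw0]; simp [norm2]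
      rw [hs0]
      positivity
    · have hdom : zs + Δ ∈ fenchelDom f := by
        have he : zs + Δ = zt := by rw [hΔdef]; module
        rw [he, hzt]
        exact grad_mem_fenchelDom hconv hdiff _
      have hle := Zf_le A (proj_perp_transpose hP) (proj_perp_idem hP) zs hΔ0 hdom
      have hq : Δ ⬝ᵥ (A * (1 - P) * Aᵀ).mulVec Δ = wv ⬝ᵥ wv := by
        rw [quad_eq_dot A (proj_perp_transpose hP) (proj_perp_idem hP), hwv, hy]
      rw [hq] at hle
      rw [hsw, norm2_eq_sqrt_dot]
      exact hle
  -- key quadratic bound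
  have key : qv ⬝ᵥ qv + wv ⬝ᵥ wv ≤ lam * μ / 2 * (Z ^ 2 * cx ^ 2) := by
    have hmain : lam * (t * t) + μ * (qv ⬝ᵥ qv) ≤ μ * ((lam * cx) * sw) := by
      rw [htsq]
      calc lam * (Δ ⬝ᵥ Δ) + μ * (qv ⬝ᵥ qv) ≤ μ * (uv ⬝ᵥ wv) := hmaster
        _ ≤ μ * ((lam * cx) * sw) := mul_le_mul_of_nonneg_left huw (le_of_lt hμ)
    rw [← hswsq]
    by_cases hZz : Z = 0
    · have hsz : sw = 0 := le_antisymm (by rw [hZz] at hwZ; simpa using hwZ) hsw0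
      rw [hsz, hZz]
      rw [hsz] at hmain
      nlinarith [hmain, hT0, hQ0, hμ, hlam, htsq]
    · have hZpos : 0 < Z := lt_of_le_of_ne hZ0 (Ne.symm hZz)
      have hfac : 0 < μ * Z ^ 2 := by positivity
      have p1 : sw * sw ≤ Z ^ 2 * (t * t) := by nlinarith [hwZ, hsw0, ht0, hZ0]
      have p1' : lam * (sw * sw) ≤ lam * (Z ^ 2 * (t * t)) :=
        mul_le_mul_of_nonneg_left p1 (le_of_lt hlam)
      have p2 : Z ^ 2 * (lam * (t * t) + μ * (qv ⬝ᵥ qv)) ≤ Z ^ 2 * (μ * ((lam * cx) * sw)) :=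
        mul_le_mul_of_nonneg_left hmain (by positivity)
      have big : (μ * Z ^ 2) * (qv ⬝ᵥ qv + sw * sw)
          ≤ (μ * Z ^ 2) * (lam * μ / 2 * (Z ^ 2 * cx ^ 2)) := by
        nlinarith [p1', p2, hZ, sq_nonneg (sw - μ * Z ^ 2 * cx), hlam, hμ, hQ0, hsw0,
          hc0, hZ0, ht0]
      exact le_of_mul_le_mul_left big hfac
  -- rewrite the goal vector
  have hgoalvec : -(lam⁻¹ • bv) - xs = (-lam⁻¹) • y := by
    have hxs2 : xs = (-lam⁻¹) • av := by
      rw [ha]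
      funext i
      simp [smul_eq_mul]
      field_simp
    rw [hyba, hxs2]
    module
  rw [hgoalvec, norm2_smul, abs_neg, abs_of_pos (inv_pos.mpr hlam)]
  have hyn : norm2 y = Real.sqrt (qv ⬝ᵥ qv + wv ⬝ᵥ wv) := by
    rw [norm2_eq_sqrt_dot]
    congr 1
    have o1 : qv ⬝ᵥ wv = 0 := by rw [hqv, hwv]; exact proj_orth hP y y
    have o2 : wv ⬝ᵥ qv = 0 := by rw [dotProduct_comm]; exact o1
    calc y ⬝ᵥ y = (qv + wv) ⬝ᵥ (qv + wv) := by rw [← hsplit]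
      _ = qv ⬝ᵥ qv + wv ⬝ᵥ wv := by
          rw [add_dotProduct, dotProduct_add, dotProduct_add, o1, o2]
          ring
  rw [hyn]
  have h7 : Real.sqrt (qv ⬝ᵥ qv + wv ⬝ᵥ wv) ≤ Real.sqrt (lam * μ / 2 * (Z ^ 2 * cx ^ 2)) :=
    Real.sqrt_le_sqrt key
  have h8 : Real.sqrt (lam * μ / 2 * (Z ^ 2 * cx ^ 2)) = Real.sqrt (lam * μ / 2) * (Z * cx) := by
    rw [Real.sqrt_mul (by positivity), show Z ^ 2 * cx ^ 2 = (Z * cx) ^ 2 from by ring,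
      Real.sqrt_sq (by positivity)]
  have h9 : Real.sqrt (μ / (2 * lam)) = lam⁻¹ * Real.sqrt (lam * μ / 2) := by
    rw [show μ / (2 * lam) = lam * μ / 2 * (lam⁻¹) ^ 2 from by field_simp,
      Real.sqrt_mul (by positivity), Real.sqrt_sq (by positivity)]
    ring
  calc lam⁻¹ * Real.sqrt (qv ⬝ᵥ qv + wv ⬝ᵥ wv)
      ≤ lam⁻¹ * (Real.sqrt (lam * μ / 2) * (Z * cx)) := by
        apply mul_le_mul_of_nonneg_left _ (by positivity)
        rw [← h8]
        exact h7
    _ = Real.sqrt (μ / (2 * lam)) * Z * cx := by rw [h9]; ring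


end Sketch
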